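/- Let Γ be a discrete, cocompact, torsion-free subgroup of SL(2,ℝ). Then the web of bisectors ℒ = ⋃_{λ ∈ Λ, λ ≠ o} L_λ is a closed set with empty interior, its complement satisfies ℍ \ ℒ = ⋃_{k ≥ 1} Int(B_k), and consequently the union over all integers k ≥ 1 of the interiors of the Brillouin sets B_k is dense in ℍ. -/

import Mathlib

noncomputable section

open UpperHalfPlane MeasureTheory Topology Filter Metric Set Pointwise

local notation "SL2R" => Matrix.SpecialLinearGroup (Fin 2) ℝ

/-- The matrix topology on `SL(2,ℝ)`, induced from the space of `2 × 2` real matrices. -/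
instance : TopologicalSpace SL2R :=
  TopologicalSpace.induced (fun g => (g : Matrix (Fin 2) (Fin 2) ℝ)) inferInstance

/-- A monoid is torsion-free if no element other than `1` has finite order
(the definition `Monoid.IsTorsionFree` of the older Mathlib, restated verbatim). -/
def Monoid.IsTorsionFree (G : Type*) [Monoid G] : Prop :=
  ∀ g : G, g ≠ 1 → ¬IsOfFinOrder g

/-- The basepoint `o = i` of the upper half-plane. -/
def o : ℍ := UpperHalfPlane.I

/-- A subgroup of `SL(2,ℝ)` is cocompact if the translates of some compact set cover `ℍ`. -/
def IsCocompact (Γ : Subgroup SL2R) : Prop :=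
  ∃ K : Set ℍ, IsCompact K ∧ ⋃ γ : Γ, (γ : SL2R) • K = Set.univ

/-- The orbit `Λ = Γ • o` of the basepoint. -/
def orbitO (Γ : Subgroup SL2R) : Set ℍ := {z : ℍ | ∃ γ ∈ Γ, γ • o = z}

/-- The focal counting function `υ(z) = #{λ ∈ Λ | λ ≠ o, d(z,λ) = d(z,o)}`. -/
def upsilon (Γ : Subgroup SL2R) (z : ℍ) : ℕ :=
  {l : ℍ | l ∈ orbitO Γ ∧ l ≠ o ∧ dist z l = dist z o}.ncard

/-- The Brillouin index `B(z) = #{λ ∈ Λ | d(z,λ) ≤ d(z,o)}`. -/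
def brillouinIndex (Γ : Subgroup SL2R) (z : ℍ) : ℕ :=
  {l : ℍ | l ∈ orbitO Γ ∧ dist z l ≤ dist z o}.ncard

/-- The `k`-th Brillouin set `B_k = {z | B(z) = k}`. -/
def brillouinSet (Γ : Subgroup SL2R) (k : ℕ) : Set ℍ := {z : ℍ | brillouinIndex Γ z = k}

/-- The perpendicular bisector `L_λ = {z | d(z,o) = d(z,λ)}`. -/
def bisector (l : ℍ) : Set ℍ := {z : ℍ | dist z o = dist z l}

/-- The web of bisectors `ℒ = ⋃_{λ ∈ Λ, λ ≠ o} L_λ`. -/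
def web (Γ : Subgroup SL2R) : Set ℍ :=
  ⋃ l ∈ {l : ℍ | l ∈ orbitO Γ ∧ l ≠ o}, bisector l

lemma cont_coe : Continuous (fun g : SL2R => (g : Matrix (Fin 2) (Fin 2) ℝ)) :=
  continuous_induced_dom

lemma inducing_coe : Topology.IsInducing (fun g : SL2R => (g : Matrix (Fin 2) (Fin 2) ℝ)) :=
  ⟨rfl⟩

lemma inj_coe : Function.Injective (fun g : SL2R => (g : Matrix (Fin 2) (Fin 2) ℝ)) :=
  Subtype.coe_injective

lemma emb_coe : Topology.IsEmbedding (fun g : SL2R => (g : Matrix (Fin 2) (Fin 2) ℝ)) :=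
  ⟨inducing_coe, inj_coe⟩

instance : T2Space SL2R := emb_coe.t2Space

instance : IsTopologicalGroup SL2R where
  continuous_mul := by
    apply continuous_induced_rng.mpr
    show Continuous (fun p : SL2R × SL2R => ((p.1 * p.2 : SL2R) : Matrix (Fin 2) (Fin 2) ℝ))
    have : (fun p : SL2R × SL2R => ((p.1 * p.2 : SL2R) : Matrix (Fin 2) (Fin 2) ℝ)) =
        fun p : SL2R × SL2R => ((p.1 : Matrix (Fin 2) (Fin 2) ℝ) * (p.2 : Matrix (Fin 2) (Fin 2) ℝ)) := by
      ext p i j <;> rw [Matrix.SpecialLinearGroup.coe_mul]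
    rw [this]
    exact (cont_coe.comp continuous_fst).mul (cont_coe.comp continuous_snd)
  continuous_inv := by
    apply continuous_induced_rng.mpr
    show Continuous (fun g : SL2R => ((g⁻¹ : SL2R) : Matrix (Fin 2) (Fin 2) ℝ))
    have : (fun g : SL2R => ((g⁻¹ : SL2R) : Matrix (Fin 2) (Fin 2) ℝ)) =
        fun g : SL2R => (g : Matrix (Fin 2) (Fin 2) ℝ).adjugate := by
      ext g i j <;> rw [Matrix.SpecialLinearGroup.coe_inv]
    rw [this]
    exact cont_coe.matrix_adjugate


lemma coe_sl_smul (g : SL2R) (z : ℍ) :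
    ((g • z : ℍ) : ℂ) = ((g 0 0 : ℝ) * z + (g 0 1 : ℝ)) / ((g 1 0 : ℝ) * z + (g 1 1 : ℝ)) := by
  rw [UpperHalfPlane.specialLinearGroup_apply]
  simp [UpperHalfPlane.coe_mk]

example (g : SL2R) (z : ℍ) : ((g 1 0 : ℂ)) * z + (g 1 1 : ℝ) ≠ 0 := by
  have h := g.2
  apply UpperHalfPlane.linear_ne_zero (cd := ![g 1 0, g 1 1]) z
  intro hc
  have h0 : g 1 0 = 0 := by simpa using congrFun hc 0
  have h1 : g 1 1 = 0 := by simpa using congrFun hc 1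
  rw [Matrix.det_fin_two] at h
  rw [h0, h1] at h
  simp at h

lemma denom_ne (g : SL2R) (z : ℍ) : ((g 1 0 : ℝ) : ℂ) * z + ((g 1 1 : ℝ) : ℂ) ≠ 0 := by
  have h := g.2
  apply UpperHalfPlane.linear_ne_zero (cd := ![g 1 0, g 1 1]) z
  intro hc
  have h0 : g 1 0 = 0 := by simpa using congrFun hc 0
  have h1 : g 1 1 = 0 := by simpa using congrFun hc 1
  rw [Matrix.det_fin_two, h0, h1] at h
  simp at h

lemma smul_o_eq1 (g : SL2R) :
    ((g • o : ℍ) : ℂ) * (((g 1 0 : ℝ) : ℂ) * Complex.I + ((g 1 1 : ℝ) : ℂ))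
      = ((g 0 0 : ℝ) : ℂ) * Complex.I + ((g 0 1 : ℝ) : ℂ) := by
  have h := coe_sl_smul g o
  rw [show ((o : ℍ) : ℂ) = Complex.I from rfl] at h
  rw [h, div_mul_cancel₀]
  exact denom_ne g o

lemma smul_o_re_im (g : SL2R) :
    (g • o).re * (g 1 1) - (g • o).im * (g 1 0) = g 0 1 ∧
    (g • o).re * (g 1 0) + (g • o).im * (g 1 1) = g 0 0 := by
  have h := smul_o_eq1 g
  rw [Complex.ext_iff] at h
  obtain ⟨h1, h2⟩ := h
  simp only [Complex.add_re, Complex.add_im, Complex.mul_re, Complex.mul_im,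
    Complex.I_re, Complex.I_im, Complex.ofReal_re, Complex.ofReal_im,
    UpperHalfPlane.coe_re, UpperHalfPlane.coe_im] at h1 h2
  constructor <;> nlinarith [h1, h2]

lemma smul_o_im_eq (g : SL2R) :
    (g • o).im * ((g 1 0)^2 + (g 1 1)^2) = 1 ∧
    (g • o).re * ((g 1 0)^2 + (g 1 1)^2) = g 0 0 * g 1 0 + g 0 1 * g 1 1 := by
  obtain ⟨h1, h2⟩ := smul_o_re_im g
  have hdet : g 0 0 * g 1 1 - g 0 1 * g 1 0 = 1 := by
    have h := g.2; rw [Matrix.det_fin_two] at h; exact h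
  constructor
  · linear_combination (g 1 1 : ℝ) * h2 - (g 1 0 : ℝ) * h1 + hdet
  · linear_combination (g 1 0 : ℝ) * h2 + (g 1 1 : ℝ) * h1

lemma continuous_smul_o : Continuous (fun g : SL2R => (g • o : ℍ)) := by
  rw [UpperHalfPlane.isEmbedding_coe.continuous_iff]
  have hkey : ∀ g : SL2R, ((g • o : ℍ) : ℂ)
      = (((g : Matrix (Fin 2) (Fin 2) ℝ) 0 0 : ℝ) * Complex.I + ((g : Matrix (Fin 2) (Fin 2) ℝ) 0 1 : ℝ)) /
        (((g : Matrix (Fin 2) (Fin 2) ℝ) 1 0 : ℝ) * Complex.I + ((g : Matrix (Fin 2) (Fin 2) ℝ) 1 1 : ℝ)) := by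
    intro g
    rw [coe_sl_smul g o]
    rfl
  have hent : ∀ i j, Continuous (fun g : SL2R => (((g : Matrix (Fin 2) (Fin 2) ℝ)) i j : ℂ)) := by
    intro i j
    exact Complex.continuous_ofReal.comp (continuous_induced_dom.matrix_elem i j)
  show Continuous (fun g : SL2R => ((g • o : ℍ) : ℂ))
  rw [continuous_congr (fun g => hkey g)]
  rw [continuous_iff_continuousAt]
  intro g
  exact ContinuousAt.div
    (((hent 0 0).mul continuous_const).add (hent 0 1)).continuousAt
    (((hent 1 0).mul continuous_const).add (hent 1 1)).continuousAt
    (denom_ne g o)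

set_option maxHeartbeats 1000000 in
lemma entries_bound (z : ℍ) (r : ℝ) : ∃ M : ℝ, ∀ g : SL2R, dist z (g • o) ≤ r →
    ∀ i j, (g : Matrix (Fin 2) (Fin 2) ℝ) i j ∈ Set.Icc (-M) M := by
  set r1 := dist o z + r with hr1
  set E := Real.exp r1 - 1 with hE
  set B := (E ^ 2 + 1) * Real.exp r1 with hB
  refine ⟨Real.sqrt B, fun g hg i j => ?_⟩
  set w := g • o with hw
  have hoim : (o : ℍ).im = 1 := rfl
  have hmul : Real.exp (-r1) * Real.exp r1 = 1 := by rw [← Real.exp_add]; simp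
  have hdo : dist o w ≤ r1 := by
    calc dist o w ≤ dist o z + dist z w := dist_triangle o z w
    _ ≤ dist o z + r := by linarith [hg]
  have hexp_mono : Real.exp (dist o w) ≤ Real.exp r1 := Real.exp_le_exp.mpr hdo
  have him_ub : w.im ≤ Real.exp r1 := by
    have h1 := UpperHalfPlane.im_le_im_mul_exp_dist w o
    rw [hoim, one_mul, dist_comm] at h1
    exact h1.trans hexp_mono
  have him_lb : Real.exp (-r1) ≤ w.im := by
    have h1 := UpperHalfPlane.im_le_im_mul_exp_dist o w
    rw [hoim] at h1
    have h2 : (1:ℝ) ≤ w.im * Real.exp r1 := by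
      nlinarith [w.im_pos, hexp_mono, Real.exp_pos (dist o w)]
    have h3 : Real.exp (-r1) * (w.im * Real.exp r1) = w.im := by
      rw [show Real.exp (-r1) * (w.im * Real.exp r1)
          = w.im * (Real.exp (-r1) * Real.exp r1) from by ring, hmul, mul_one]
    have h4 := mul_le_mul_of_nonneg_left h2 (Real.exp_pos (-r1)).le
    rw [h3] at h4
    linarith [h4]
  have hre : |w.re| ≤ E := by
    have h1 := UpperHalfPlane.dist_coe_le w o
    rw [hoim, one_mul] at h1
    have h2 : dist (w : ℂ) ((o : ℍ) : ℂ) ≤ E := by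
      rw [hE]
      have : Real.exp (dist w o) ≤ Real.exp r1 := by rw [dist_comm]; exact hexp_mono
      linarith [h1]
    have h3 : |w.re| = |((w : ℂ) - ((o:ℍ):ℂ)).re| := by
      rw [show ((o:ℍ) : ℂ) = Complex.I from rfl]
      simp [Complex.sub_re, UpperHalfPlane.coe_re]
    rw [h3]
    exact le_trans (Complex.abs_re_le_norm _) (by rw [Complex.dist_eq] at h2; exact h2)
  obtain ⟨heq1, heq2⟩ := smul_o_im_eq g
  rw [← hw] at heq1 heq2
  set a := (g : Matrix (Fin 2) (Fin 2) ℝ) 0 0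
  set b := (g : Matrix (Fin 2) (Fin 2) ℝ) 0 1
  set c := (g : Matrix (Fin 2) (Fin 2) ℝ) 1 0
  set d := (g : Matrix (Fin 2) (Fin 2) ℝ) 1 1
  have hdet : a * d - b * c = 1 := by
    have h := g.2; rw [Matrix.det_fin_two] at h; exact h
  have hy := w.im_pos
  have hcd_pos : 0 < c ^ 2 + d ^ 2 := by nlinarith [heq1, hy]
  have hcd_ub : c ^ 2 + d ^ 2 ≤ Real.exp r1 := by
    have h4 := mul_le_mul_of_nonneg_right him_lb hcd_pos.le
    rw [heq1] at h4
    -- h4 : exp(-r1) * (c^2+d^2) ≤ 1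
    have h5 := mul_le_mul_of_nonneg_left h4 (Real.exp_pos r1).le
    -- exp r1 * (exp(-r1) * S) ≤ exp r1 * 1
    nlinarith [h5, hmul]
  have hcd_lb : Real.exp (-r1) ≤ c ^ 2 + d ^ 2 := by
    have h4 := mul_le_mul_of_nonneg_right him_ub hcd_pos.le
    rw [heq1] at h4
    -- 1 ≤ exp r1 * S
    have h5 := mul_le_mul_of_nonneg_left h4 (Real.exp_pos (-r1)).le
    nlinarith [h5, hmul]
  have hB_exp : Real.exp r1 ≤ B := by nlinarith [Real.exp_pos r1, sq_nonneg E]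
  have hx2 : w.re ^ 2 ≤ E ^ 2 := by
    have h6 := pow_le_pow_left₀ (abs_nonneg w.re) hre 2
    rwa [sq_abs] at h6
  have hexp1 : (1:ℝ) ≤ Real.exp r1 * (c ^ 2 + d ^ 2) := by
    have h7 := mul_le_mul_of_nonneg_left hcd_lb (Real.exp_pos r1).le
    nlinarith [h7, hmul]
  have hab : a ^ 2 + b ^ 2 ≤ B := by
    have hkey : (a ^ 2 + b ^ 2) * (c ^ 2 + d ^ 2)
        = (w.re * (c ^ 2 + d ^ 2)) ^ 2 + 1 := by
      linear_combination (-(a*c+b*d) - w.re*(c^2+d^2)) * heq2 + (a*d - b*c + 1) * hdet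
    have p1 : w.re ^ 2 * (c ^ 2 + d ^ 2) ≤ E ^ 2 * Real.exp r1 :=
      mul_le_mul hx2 hcd_ub hcd_pos.le (sq_nonneg E)
    have p2 : w.re ^ 2 * (c ^ 2 + d ^ 2) * (c ^ 2 + d ^ 2)
        ≤ E ^ 2 * Real.exp r1 * (c ^ 2 + d ^ 2) :=
      mul_le_mul_of_nonneg_right p1 hcd_pos.le
    have hle : (a ^ 2 + b ^ 2) * (c ^ 2 + d ^ 2) ≤ B * (c ^ 2 + d ^ 2) := by
      rw [hkey, hB]
      nlinarith [p2, hexp1]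
    exact le_of_mul_le_mul_right hle hcd_pos
  have hent : ((g : Matrix (Fin 2) (Fin 2) ℝ) i j) ^ 2 ≤ B := by
    fin_cases i <;> fin_cases j
    · show a ^ 2 ≤ B; nlinarith [hab, sq_nonneg b]
    · show b ^ 2 ≤ B; nlinarith [hab, sq_nonneg a]
    · show c ^ 2 ≤ B; nlinarith [hcd_ub, hB_exp, sq_nonneg d]
    · show d ^ 2 ≤ B; nlinarith [hcd_ub, hB_exp, sq_nonneg c]
  have habs : |(g : Matrix (Fin 2) (Fin 2) ℝ) i j| ≤ Real.sqrt B := by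
    rw [← Real.sqrt_sq_eq_abs]
    exact Real.sqrt_le_sqrt hent
  rw [Set.mem_Icc]
  constructor
  · linarith [neg_abs_le ((g : Matrix (Fin 2) (Fin 2) ℝ) i j), habs]
  · linarith [le_abs_self ((g : Matrix (Fin 2) (Fin 2) ℝ) i j), habs]


lemma isCompact_T (z : ℍ) (r : ℝ) : IsCompact {g : SL2R | dist z (g • o) ≤ r} := by
  set T := {g : SL2R | dist z (g • o) ≤ r} with hT
  have hTclosed : IsClosed T := by
    have hcont : Continuous (fun g : SL2R => dist z (g • o)) :=
      continuous_const.dist continuous_smul_o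
    exact IsClosed.preimage hcont isClosed_Iic
  have hrange : Set.range (fun g : SL2R => (g : Matrix (Fin 2) (Fin 2) ℝ))
      = {A : Matrix (Fin 2) (Fin 2) ℝ | A.det = 1} := by
    ext A
    constructor
    · rintro ⟨g, rfl⟩; exact g.2
    · intro h; exact ⟨⟨A, h⟩, rfl⟩
  have hclemb : Topology.IsClosedEmbedding (fun g : SL2R => (g : Matrix (Fin 2) (Fin 2) ℝ)) := by
    refine ⟨emb_coe, ?_⟩
    rw [hrange]
    exact isClosed_eq (continuous_id.matrix_det) continuous_const
  rw [emb_coe.isCompact_iff]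
  obtain ⟨M, hM⟩ := entries_bound z r
  have hbox : IsCompact (Set.univ.pi fun _ : Fin 2 => (Set.univ.pi fun _ : Fin 2 =>
      Set.Icc (-M) M : Set (Fin 2 → ℝ))) :=
    isCompact_univ_pi fun _ => isCompact_univ_pi fun _ => isCompact_Icc
  apply IsCompact.of_isClosed_subset hbox (hclemb.isClosedMap _ hTclosed)
  rintro A ⟨g, hgT, rfl⟩
  simp only [Set.mem_pi, Set.mem_univ, forall_true_left]
  intro i _ j _
  exact hM g hgT i j

lemma orbit_finite (Γ : Subgroup SL2R) (hdisc : DiscreteTopology Γ) (z : ℍ) (r : ℝ) :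
    {l : ℍ | l ∈ orbitO Γ ∧ dist z l ≤ r}.Finite := by
  haveI := hdisc
  set T := {g : SL2R | dist z (g • o) ≤ r} with hTdef
  have hC : IsCompact ((Γ : Set SL2R) ∩ T) :=
    (isCompact_T z r).inter_left (Subgroup.isClosed_of_discrete)
  haveI : DiscreteTopology ((Γ : Set SL2R) ∩ T : Set SL2R) :=
    DiscreteTopology.of_subset (hdisc) Set.inter_subset_left
  have hfin : ((Γ : Set SL2R) ∩ T).Finite := hC.finite ⟨inferInstance⟩
  apply Set.Finite.subset (hfin.image (fun g => g • o))
  rintro l ⟨⟨γ, hγ, rfl⟩, hd⟩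
  exact ⟨γ, ⟨hγ, hd⟩, rfl⟩

def Q (l : ℍ) (z : ℍ) : ℝ :=
  Complex.normSq ((z : ℂ) - l) - l.im * Complex.normSq ((z : ℂ) - Complex.I)

lemma coe_o : ((o : ℍ) : ℂ) = Complex.I := rfl
lemma o_im : (o : ℍ).im = 1 := rfl

lemma cosh_dist_o (z l : ℍ) :
    Real.cosh (dist z l) = 1 + Complex.normSq ((z:ℂ) - l) / (2 * z.im * l.im) := by
  rw [UpperHalfPlane.cosh_dist, Complex.dist_eq, Complex.sq_norm]

lemma dist_o_le_iff (z l : ℍ) : dist z o ≤ dist z l ↔ 0 ≤ Q l z := by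
  rw [show dist z o ≤ dist z l ↔ Real.cosh (dist z o) ≤ Real.cosh (dist z l) by
    rw [Real.cosh_le_cosh, abs_of_nonneg dist_nonneg, abs_of_nonneg dist_nonneg]]
  rw [cosh_dist_o z l, cosh_dist_o z o, coe_o, o_im]
  have hy := z.im_pos
  have hm := l.im_pos
  rw [add_le_add_iff_left, div_le_div_iff₀ (by linarith) (by positivity)]
  unfold Q
  constructor <;> intro h <;> nlinarith [h, hy, hm]

lemma dist_le_o_iff (z l : ℍ) : dist z l ≤ dist z o ↔ Q l z ≤ 0 := by
  rw [show dist z l ≤ dist z o ↔ Real.cosh (dist z l) ≤ Real.cosh (dist z o) by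
    rw [Real.cosh_le_cosh, abs_of_nonneg dist_nonneg, abs_of_nonneg dist_nonneg]]
  rw [cosh_dist_o z l, cosh_dist_o z o, coe_o, o_im]
  have hy := z.im_pos
  have hm := l.im_pos
  rw [add_le_add_iff_left, div_le_div_iff₀ (by positivity) (by linarith)]
  unfold Q
  constructor <;> intro h <;> nlinarith [h, hy, hm]

lemma dist_o_lt_iff (z l : ℍ) : dist z o < dist z l ↔ 0 < Q l z := by
  rw [← not_le, ← not_le, dist_le_o_iff]
lemma dist_lt_o_iff (z l : ℍ) : dist z l < dist z o ↔ Q l z < 0 := by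
  rw [← not_le, ← not_le, dist_o_le_iff]
lemma dist_o_eq_iff (z l : ℍ) : dist z o = dist z l ↔ Q l z = 0 := by
  constructor
  · intro h
    exact le_antisymm ((dist_le_o_iff z l).mp h.ge) ((dist_o_le_iff z l).mp h.le)
  · intro h
    exact le_antisymm ((dist_o_le_iff z l).mpr h.ge) ((dist_le_o_iff z l).mpr h.le)

lemma Q_formula (l w : ℍ) :
    Q l w = (1 - l.im) * (w.re ^ 2 + w.im ^ 2) - 2 * l.re * w.re
      + (l.re ^ 2 + l.im ^ 2 - l.im) := by
  simp only [Q, Complex.normSq_apply, Complex.sub_re, Complex.sub_im, Complex.I_re,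
    Complex.I_im, UpperHalfPlane.coe_re, UpperHalfPlane.coe_im]
  ring

lemma Q_o_pos (l : ℍ) (hl : l ≠ o) : 0 < Q l o := by
  have : Q l o = Complex.normSq (Complex.I - l) := by
    unfold Q
    rw [coe_o]
    simp
  rw [this]
  apply Complex.normSq_pos.mpr
  intro h
  apply hl
  have : (l : ℂ) = Complex.I := by
    have := sub_eq_zero.mp h
    exact this.symm
  exact UpperHalfPlane.ext (by rw [this, coe_o])

set_option maxHeartbeats 1000000 in
lemma approach (z : ℍ) (hz : z ≠ o) {ε : ℝ} (hε : 0 < ε) :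
    ∃ w : ℍ, dist w z < ε ∧ ∀ l : ℍ, l ≠ o → Q l z = 0 → 0 < Q l w := by
  have hy : (0:ℝ) < z.im := z.im_pos
  suffices hsuff : ∃ f : ℝ → ℂ, Continuous f ∧ f 1 = (z : ℂ) ∧ ∀ t : ℝ, 0 < t → t < 1 →
      ∀ l : ℍ, l ≠ o → Q l z = 0 →
        0 < (1 - l.im) * ((f t).re ^ 2 + (f t).im ^ 2) - 2 * l.re * (f t).re
          + (l.re ^ 2 + l.im ^ 2 - l.im) by
    obtain ⟨f, hfc, hf1, hfP⟩ := hsuff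
    have hU : IsOpen ((UpperHalfPlane.coe) '' Metric.ball z ε) :=
      UpperHalfPlane.isOpenEmbedding_coe.isOpenMap _ Metric.isOpen_ball
    have hzU : f 1 ∈ (UpperHalfPlane.coe) '' Metric.ball z ε :=
      ⟨z, Metric.mem_ball_self hε, hf1.symm⟩
    have hnb : f ⁻¹' ((UpperHalfPlane.coe) '' Metric.ball z ε) ∈ 𝓝 (1 : ℝ) :=
      hfc.continuousAt.preimage_mem_nhds (hU.mem_nhds hzU)
    obtain ⟨δ, hδ, hball⟩ := Metric.mem_nhds_iff.mp hnb
    set t := 1 - min δ 1 / 2 with htdef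
    have ht0 : 0 < t := by
      have : min δ 1 ≤ 1 := min_le_right _ _
      simp only [htdef]; linarith
    have ht1 : t < 1 := by
      have : 0 < min δ 1 := lt_min hδ one_pos
      simp only [htdef]; linarith
    have htb : t ∈ Metric.ball (1:ℝ) δ := by
      have h1 : min δ 1 ≤ δ := min_le_left _ _
      have h2 : 0 < min δ 1 := lt_min hδ one_pos
      simp only [Metric.mem_ball, htdef, Real.dist_eq]
      rw [abs_of_nonpos (by linarith)]
      linarith
    obtain ⟨w, hwb, hwc⟩ := hball htb
    refine ⟨w, Metric.mem_ball.mp hwb, fun l hl hQ0 => ?_⟩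
    have hre : w.re = (f t).re := by rw [← UpperHalfPlane.coe_re, hwc]
    have him : w.im = (f t).im := by rw [← UpperHalfPlane.coe_im, hwc]
    rw [Q_formula, hre, him]
    exact hfP t ht0 ht1 l hl hQ0
  have hQo_eq : ∀ l : ℍ, Q l o = (1 - l.im) + (l.re ^ 2 + l.im ^ 2 - l.im) := by
    intro l
    rw [Q_formula]
    have h1 : (o : ℍ).re = 0 := rfl
    have h2 : (o : ℍ).im = 1 := rfl
    rw [h1, h2]; ring
  by_cases hx : z.re = 0
  · -- vertical axis case
    have hy1 : z.im ≠ 1 := by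
      intro h
      exact hz (UpperHalfPlane.ext' (by rw [hx]; rfl) (by rw [h]; rfl))
    refine ⟨fun t => Complex.I * ((t * z.im + (1 - t) : ℝ) : ℂ), ?_, ?_, ?_⟩
    · exact continuous_const.mul (Complex.continuous_ofReal.comp (by fun_prop))
    · apply Complex.ext
      · simp only [Complex.mul_re, Complex.I_re, Complex.I_im, Complex.ofReal_re,
          Complex.ofReal_im, UpperHalfPlane.coe_re]
        rw [hx]; ring
      · simp only [Complex.mul_im, Complex.I_re, Complex.I_im, Complex.ofReal_re,
          Complex.ofReal_im, UpperHalfPlane.coe_im]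
        ring
    · intro t ht0 ht1 l hl hQ0
      have hre : (Complex.I * ((t * z.im + (1 - t) : ℝ) : ℂ)).re = 0 := by simp
      have him : (Complex.I * ((t * z.im + (1 - t) : ℝ) : ℂ)).im = t * z.im + (1 - t) := by simp
      rw [hre, him]
      have hQ0' : (1 - l.im) * z.im ^ 2 + (l.re ^ 2 + l.im ^ 2 - l.im) = 0 := by
        rw [Q_formula, hx] at hQ0
        linear_combination hQ0
      have hQo' : 0 < (1 - l.im) + (l.re ^ 2 + l.im ^ 2 - l.im) := by
        rw [← hQo_eq l]; exact Q_o_pos l hl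
      have hq : 0 < (1 - l.im) * (1 - z.im ^ 2) := by nlinarith [hQ0', hQo']
      have h1t : 0 < 1 - t := by linarith
      have hYy : 0 < (t * z.im + (1 - t)) + z.im := by nlinarith [hy]
      have hy1' : 0 < 1 + z.im := by linarith
      have key : ((1 - l.im) * (0 ^ 2 + (t * z.im + (1 - t)) ^ 2) - 2 * l.re * 0
            + (l.re ^ 2 + l.im ^ 2 - l.im)) * (1 + z.im)
          = ((1 - l.im) * (1 - z.im ^ 2)) * ((1 - t) * ((t * z.im + (1 - t)) + z.im)) := by
        have hc : l.re ^ 2 + l.im ^ 2 - l.im = -((1 - l.im) * z.im ^ 2) := by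
          linear_combination hQ0'
        rw [hc]; ring
      nlinarith [key, mul_pos hq (mul_pos h1t hYy), hy1']
  · -- circle case
    obtain ⟨x₀, h2x⟩ : ∃ x₀ : ℝ, 2 * z.re * x₀ = z.re ^ 2 + z.im ^ 2 - 1 :=
      ⟨(z.re ^ 2 + z.im ^ 2 - 1) / (2 * z.re), by field_simp⟩
    refine ⟨fun t => ((t * z.re : ℝ) : ℂ)
        + ((Real.sqrt (x₀ ^ 2 + 1 - (t * z.re - x₀) ^ 2) : ℝ) : ℂ) * Complex.I, ?_, ?_, ?_⟩
    · apply Continuous.add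
      · exact Complex.continuous_ofReal.comp (by fun_prop)
      · exact (Complex.continuous_ofReal.comp (Real.continuous_sqrt.comp (by fun_prop))).mul
          continuous_const
    · have hR1 : x₀ ^ 2 + 1 - (1 * z.re - x₀) ^ 2 = z.im ^ 2 := by linear_combination h2x
      apply Complex.ext
      · simp
      · simp only [Complex.add_im, Complex.ofReal_im, Complex.mul_im, Complex.I_im,
          Complex.I_re, Complex.ofReal_re, hR1]
        rw [Real.sqrt_sq hy.le]
        simp [UpperHalfPlane.coe_im]
    · intro t ht0 ht1 l hl hQ0
      have hrt_pos : 0 < x₀ ^ 2 + 1 - (t * z.re - x₀) ^ 2 := by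
        have hformula : x₀ ^ 2 + 1 - (t * z.re - x₀) ^ 2
            = t * z.im ^ 2 + (1 - t) + t * (1 - t) * z.re ^ 2 := by
          linear_combination t * h2x
        rw [hformula]
        have p1 : 0 < t * z.im ^ 2 := mul_pos ht0 (pow_pos hy 2)
        have p2 : 0 ≤ t * (1 - t) * z.re ^ 2 :=
          mul_nonneg (mul_nonneg ht0.le (by linarith)) (sq_nonneg _)
        linarith
      have hre : ((((t * z.re : ℝ)) : ℂ)
          + ((Real.sqrt (x₀ ^ 2 + 1 - (t * z.re - x₀) ^ 2) : ℝ) : ℂ) * Complex.I).re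
          = t * z.re := by simp
      have him : ((((t * z.re : ℝ)) : ℂ)
          + ((Real.sqrt (x₀ ^ 2 + 1 - (t * z.re - x₀) ^ 2) : ℝ) : ℂ) * Complex.I).im
          = Real.sqrt (x₀ ^ 2 + 1 - (t * z.re - x₀) ^ 2) := by simp
      rw [hre, him, Real.sq_sqrt hrt_pos.le]
      have hQ0' : (1 - l.im) * (z.re ^ 2 + z.im ^ 2) - 2 * l.re * z.re
          + (l.re ^ 2 + l.im ^ 2 - l.im) = 0 := by
        rw [Q_formula] at hQ0; exact hQ0
      have hQo' : 0 < (1 - l.im) + (l.re ^ 2 + l.im ^ 2 - l.im) := by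
        rw [← hQo_eq l]; exact Q_o_pos l hl
      have hval : (1 - l.im) * ((t * z.re) ^ 2 + (x₀ ^ 2 + 1 - (t * z.re - x₀) ^ 2))
            - 2 * l.re * (t * z.re) + (l.re ^ 2 + l.im ^ 2 - l.im)
          = t * ((1 - l.im) * (z.re ^ 2 + z.im ^ 2) - 2 * l.re * z.re
              + (l.re ^ 2 + l.im ^ 2 - l.im))
            + (1 - t) * ((1 - l.im) + (l.re ^ 2 + l.im ^ 2 - l.im)) := by
        linear_combination ((1 - l.im) * t) * h2x
      rw [hval, hQ0']
      have hpos : 0 < (1 - t) * ((1 - l.im) + (l.re ^ 2 + l.im ^ 2 - l.im)) :=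
        mul_pos (by linarith) hQo'
      linarith


lemma mem_web_iff (Γ : Subgroup SL2R) (z : ℍ) :
    z ∈ web Γ ↔ ∃ l : ℍ, l ∈ orbitO Γ ∧ l ≠ o ∧ dist z o = dist z l := by
  simp only [web, bisector, Set.mem_iUnion, Set.mem_setOf_eq, exists_prop]
  tauto

lemma o_mem_orbit (Γ : Subgroup SL2R) : o ∈ orbitO Γ := ⟨1, Γ.one_mem, one_smul _ _⟩

lemma eventually_good (Γ : Subgroup SL2R) (hdisc : DiscreteTopology Γ) (z : ℍ) :
    ∀ᶠ w in 𝓝 z,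
      (∀ l : ℍ, l ∈ orbitO Γ → dist w l ≤ dist w o → dist z l ≤ dist z o + 2) ∧
      (∀ l : ℍ, l ∈ orbitO Γ → dist z l ≤ dist z o + 2 →
        (dist z l < dist z o → dist w l < dist w o) ∧
        (dist z o < dist z l → dist w o < dist w l)) := by
  have h1 : ∀ᶠ w in 𝓝 z, dist w z < 1/2 :=
    Metric.eventually_nhds_iff.mpr ⟨1/2, by norm_num, fun w hw => hw⟩
  have hFfin : {l : ℍ | l ∈ orbitO Γ ∧ dist z l ≤ dist z o + 2}.Finite :=
    orbit_finite Γ hdisc z (dist z o + 2)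
  have h2 : ∀ᶠ w in 𝓝 z, ∀ l ∈ {l : ℍ | l ∈ orbitO Γ ∧ dist z l ≤ dist z o + 2},
      (dist z l < dist z o → dist w l < dist w o) ∧
      (dist z o < dist z l → dist w o < dist w l) := by
    rw [Set.Finite.eventually_all hFfin]
    intro l _
    apply Filter.Eventually.and
    · by_cases hlt : dist z l < dist z o
      · have hopen : IsOpen {w : ℍ | dist w l < dist w o} :=
          isOpen_lt (continuous_id.dist continuous_const) (continuous_id.dist continuous_const)
        exact (hopen.eventually_mem hlt).mono fun w hw _ => hw
      · exact Filter.Eventually.of_forall fun w h => (hlt h).elim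
    · by_cases hlt : dist z o < dist z l
      · have hopen : IsOpen {w : ℍ | dist w o < dist w l} :=
          isOpen_lt (continuous_id.dist continuous_const) (continuous_id.dist continuous_const)
        exact (hopen.eventually_mem hlt).mono fun w hw _ => hw
      · exact Filter.Eventually.of_forall fun w h => (hlt h).elim
  filter_upwards [h1, h2] with w hw1 hw2
  constructor
  · intro l _ hwl
    have t1 : dist z l ≤ dist z w + dist w l := dist_triangle z w l
    have t2 : dist w o ≤ dist w z + dist z o := dist_triangle w z o
    have t3 : dist z w = dist w z := dist_comm z w
    linarith
  · intro l horb hl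
    exact hw2 l ⟨horb, hl⟩

/-- The web of bisectors is closed and nowhere dense, its complement is the union of the
interiors of the Brillouin sets, and hence that union is dense in `ℍ`. -/
theorem web_closed_nowhere_dense_and_brillouin_interiors_dense
    (Γ : Subgroup SL2R)
    (hdisc : DiscreteTopology Γ) (hcc : IsCocompact Γ) (htf : Monoid.IsTorsionFree Γ) :
    IsClosed (web Γ) ∧ interior (web Γ) = ∅ ∧
    (web Γ)ᶜ = ⋃ k ∈ {k : ℕ | 1 ≤ k}, interior (brillouinSet Γ k) ∧
    Dense (⋃ k ∈ {k : ℕ | 1 ≤ k}, interior (brillouinSet Γ k)) := by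
  have hz_ne_o : ∀ z l : ℍ, l ∈ orbitO Γ → l ≠ o → dist z o = dist z l → z ≠ o := by
    intro z l _ hlne heq hzo
    subst hzo
    rw [dist_self] at heq
    exact hlne (by rwa [eq_comm, dist_eq_zero, eq_comm] at heq)
  -- Claim 1 : closed
  have hclosed : IsClosed (web Γ) := by
    rw [← isOpen_compl_iff, isOpen_iff_mem_nhds]
    intro z hz
    filter_upwards [eventually_good Γ hdisc z] with w ⟨hg1, hg2⟩
    intro hw
    obtain ⟨l, horb, hlne, heq⟩ := (mem_web_iff Γ w).mp hw
    have hlF : dist z l ≤ dist z o + 2 := hg1 l horb (le_of_eq heq.symm)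
    rcases lt_trichotomy (dist z l) (dist z o) with hlt | heqz | hgt
    · have := (hg2 l horb hlF).1 hlt; linarith [heq, this]
    · exact hz ((mem_web_iff Γ z).mpr ⟨l, horb, hlne, heqz.symm⟩)
    · have := (hg2 l horb hlF).2 hgt; linarith [heq, this]
  -- Claim 2 : empty interior
  have hint : interior (web Γ) = ∅ := by
    rw [Set.eq_empty_iff_forall_notMem]
    intro z hzint
    obtain ⟨l₀, h₀orb, h₀ne, h₀eq⟩ := (mem_web_iff Γ z).mp (interior_subset hzint)
    have hzne : z ≠ o := hz_ne_o z l₀ h₀orb h₀ne h₀eq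
    have hev := (eventually_good Γ hdisc z).and (mem_interior_iff_mem_nhds.mp hzint)
    obtain ⟨ε, hε, hball⟩ := Metric.eventually_nhds_iff.mp hev
    obtain ⟨w, hwd, hwQ⟩ := approach z hzne hε
    obtain ⟨⟨hg1, hg2⟩, hwweb⟩ := hball hwd
    obtain ⟨l, horb, hlne, heq⟩ := (mem_web_iff Γ w).mp hwweb
    have hlF : dist z l ≤ dist z o + 2 := hg1 l horb (le_of_eq heq.symm)
    rcases lt_trichotomy (dist z l) (dist z o) with hlt | heqz | hgt
    · have := (hg2 l horb hlF).1 hlt; linarith [heq, this]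
    · have hQ0 : Q l z = 0 := (dist_o_eq_iff z l).mp heqz.symm
      have := (dist_o_lt_iff w l).mpr (hwQ l hlne hQ0)
      linarith [heq, this]
    · have := (hg2 l horb hlF).2 hgt; linarith [heq, this]
  -- Claim 3 : complement identity
  have hcompl : (web Γ)ᶜ = ⋃ k ∈ {k : ℕ | 1 ≤ k}, interior (brillouinSet Γ k) := by
    ext z
    simp only [Set.mem_compl_iff, Set.mem_iUnion, Set.mem_setOf_eq, exists_prop]
    constructor
    · intro hz
      have hSfin : {l : ℍ | l ∈ orbitO Γ ∧ dist z l ≤ dist z o}.Finite :=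
        orbit_finite Γ hdisc z (dist z o)
      refine ⟨brillouinIndex Γ z, ?_, ?_⟩
      · have : 0 < brillouinIndex Γ z := by
          rw [brillouinIndex, Set.ncard_pos hSfin]
          exact ⟨o, o_mem_orbit Γ, le_refl _⟩
        omega
      · rw [mem_interior_iff_mem_nhds]
        filter_upwards [eventually_good Γ hdisc z] with w ⟨hg1, hg2⟩
        show brillouinIndex Γ w = brillouinIndex Γ z
        unfold brillouinIndex
        congr 1
        ext l
        simp only [Set.mem_setOf_eq]
        constructor
        · rintro ⟨horb, hle⟩
          refine ⟨horb, ?_⟩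
          have hlF : dist z l ≤ dist z o + 2 := hg1 l horb hle
          rcases lt_trichotomy (dist z l) (dist z o) with hlt | heqz | hgt
          · exact hlt.le
          · exact heqz.le
          · have := (hg2 l horb hlF).2 hgt; linarith
        · rintro ⟨horb, hle⟩
          refine ⟨horb, ?_⟩
          have hlF : dist z l ≤ dist z o + 2 := by linarith
          rcases lt_or_eq_of_le hle with hlt | heqz
          · exact ((hg2 l horb hlF).1 hlt).le
          · by_cases hlo : l = o
            · subst hlo; exact le_refl _
            · exact absurd ((mem_web_iff Γ z).mpr ⟨l, horb, hlo, heqz.symm⟩) hz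
    · rintro ⟨k, hk1, hzint⟩ hzweb
      obtain ⟨l₀, h₀orb, h₀ne, h₀eq⟩ := (mem_web_iff Γ z).mp hzweb
      have hzne : z ≠ o := hz_ne_o z l₀ h₀orb h₀ne h₀eq
      have hev := (eventually_good Γ hdisc z).and (mem_interior_iff_mem_nhds.mp hzint)
      obtain ⟨ε, hε, hball⟩ := Metric.eventually_nhds_iff.mp hev
      obtain ⟨w, hwd, hwQ⟩ := approach z hzne hε
      obtain ⟨⟨hg1, hg2⟩, hwB⟩ := hball hwd
      have hzB' : z ∈ brillouinSet Γ k := interior_subset hzint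
      have hzB : brillouinIndex Γ z = k := hzB'
      have hwB' : brillouinIndex Γ w = k := hwB
      have hsub : {l : ℍ | l ∈ orbitO Γ ∧ dist w l ≤ dist w o}
          ⊆ {l : ℍ | l ∈ orbitO Γ ∧ dist z l ≤ dist z o} := by
        rintro l ⟨horb, hle⟩
        refine ⟨horb, ?_⟩
        have hlF : dist z l ≤ dist z o + 2 := hg1 l horb hle
        rcases lt_trichotomy (dist z l) (dist z o) with hlt | heqz | hgt
        · exact hlt.le
        · exact heqz.le
        · have := (hg2 l horb hlF).2 hgt; linarith
      have hl₀mem : l₀ ∈ {l : ℍ | l ∈ orbitO Γ ∧ dist z l ≤ dist z o} :=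
        ⟨h₀orb, le_of_eq h₀eq.symm⟩
      have hl₀not : l₀ ∉ {l : ℍ | l ∈ orbitO Γ ∧ dist w l ≤ dist w o} := by
        rintro ⟨-, hle⟩
        have hQ0 : Q l₀ z = 0 := (dist_o_eq_iff z l₀).mp h₀eq
        have := (dist_o_lt_iff w l₀).mpr (hwQ l₀ h₀ne hQ0)
        linarith
      have hss : {l : ℍ | l ∈ orbitO Γ ∧ dist w l ≤ dist w o}
          ⊂ {l : ℍ | l ∈ orbitO Γ ∧ dist z l ≤ dist z o} :=
        (ssubset_iff_of_subset hsub).mpr ⟨l₀, hl₀mem, hl₀not⟩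
      have hlt := Set.ncard_lt_ncard hss (orbit_finite Γ hdisc z (dist z o))
      rw [show {l : ℍ | l ∈ orbitO Γ ∧ dist w l ≤ dist w o}.ncard = brillouinIndex Γ w from rfl,
        show {l : ℍ | l ∈ orbitO Γ ∧ dist z l ≤ dist z o}.ncard = brillouinIndex Γ z from rfl,
        hzB, hwB'] at hlt
      exact lt_irrefl k hlt
  refine ⟨hclosed, hint, hcompl, ?_⟩
  rw [← hcompl]
  exact interior_eq_empty_iff_dense_compl.mp hint
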